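/- Let γ > 1, p(v) = v^{-γ}, and fix v₋ > 0. There exist constants c > 0 and δ* > 0 such that for all 0 < δ < δ* and all v, w > 0 with |p(v) - p(w)| < δ and |p(w) - p(v₋)| < δ, the relative pressure satisfies p(v|w) ≤ ((γ+1)/(2γ) · 1/p(w) + cδ) · |p(v) - p(w)|². -/

import Mathlib

open Real Set

lemma lipA (α m : ℝ) (hα : 0 < α) (hm : 0 < m) {a b : ℝ} (ha : m ≤ a) (hb : m ≤ b) :
    |a ^ (-α) - b ^ (-α)| ≤ α * m ^ (-α - 1) * |a - b| := by
  have h := Convex.norm_image_sub_le_of_norm_hasDerivWithin_le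
    (f := fun x : ℝ => x ^ (-α)) (f' := fun x : ℝ => -α * x ^ (-α - 1)) (s := Ici m)
    (fun x hx => (Real.hasDerivAt_rpow_const
      (Or.inl (ne_of_gt (lt_of_lt_of_le hm hx)))).hasDerivWithinAt)
    (fun x hx => by
      have hx0 : (0:ℝ) < x := lt_of_lt_of_le hm hx
      have h1 : x ^ (-α - 1) ≤ m ^ (-α - 1) :=
        Real.rpow_le_rpow_of_nonpos hm hx (by linarith)
      have h2 : (0:ℝ) ≤ x ^ (-α - 1) := (Real.rpow_pos_of_pos hx0 _).le
      rw [norm_mul, Real.norm_eq_abs, Real.norm_eq_abs, abs_neg, abs_of_pos hα,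
        abs_of_nonneg h2]
      exact mul_le_mul_of_nonneg_left h1 hα.le)
    (convex_Ici m) hb ha
  simpa [Real.norm_eq_abs] using h

lemma taylorB (α a P Q : ℝ) (hα : 0 < α) (ha : 0 < a) (hP : a ≤ P) (hQ : a ≤ Q) :
    P ^ (-α) - Q ^ (-α) + α * Q ^ (-α - 1) * (P - Q) ≤
      α * (α + 1) * a ^ (-α - 2) / 2 * (P - Q) ^ 2 := by
  set K : ℝ := α * (α + 1) * a ^ (-α - 2) with hK
  set ψ : ℝ → ℝ := fun x => x ^ (-α) + α * Q ^ (-α - 1) * x - K / 2 * (x - Q) ^ 2 with hψ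
  have hlip : ∀ x : ℝ, a ≤ x → α * |Q ^ (-α - 1) - x ^ (-α - 1)| ≤ K * |x - Q| := by
    intro x hx
    have h := lipA (α + 1) a (by positivity) ha hQ hx
    have e1 : -(α + 1) = -α - 1 := by ring
    have e2 : -α - 1 - 1 = -α - 2 := by ring
    rw [e1, e2] at h; rw [abs_sub_comm Q x] at h
    calc α * |Q ^ (-α - 1) - x ^ (-α - 1)| ≤ α * ((α + 1) * a ^ (-α - 2) * |x - Q|) :=
          mul_le_mul_of_nonneg_left h hα.le
      _ = K * |x - Q| := by rw [hK]; ring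
  -- derivative of ψ
  have hder : ∀ x : ℝ, 0 < x →
      HasDerivAt ψ (-α * x ^ (-α - 1) + α * Q ^ (-α - 1) - K * (x - Q)) x := by
    intro x hx
    have h1 : HasDerivAt (fun x : ℝ => x ^ (-α)) (-α * x ^ (-α - 1)) x :=
      Real.hasDerivAt_rpow_const (Or.inl hx.ne')
    have h2 : HasDerivAt (fun x : ℝ => α * Q ^ (-α - 1) * x) (α * Q ^ (-α - 1)) x := by
      simpa using (hasDerivAt_id x).const_mul (α * Q ^ (-α - 1))
    have h3 : HasDerivAt (fun x : ℝ => K / 2 * (x - Q) ^ 2) (K * (x - Q)) x := by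
      have := (((hasDerivAt_id x).sub_const Q).pow 2).const_mul (K / 2)
      convert this using 1
      · rfl
      · rfl
      · funext y; simp
      · simp; ring
    exact (h1.add h2).sub h3
  have hcont : ∀ s : Set ℝ, (∀ x ∈ s, a ≤ x) → ContinuousOn ψ s := by
    intro s hs
    apply ContinuousOn.sub
    · apply ContinuousOn.add
      · exact fun x hx => (Real.continuousAt_rpow_const x (-α)
          (Or.inl (by linarith [hs x hx]))).continuousWithinAt
      · exact (continuous_const.mul continuous_id).continuousOn
    · exact (continuous_const.mul ((continuous_id.sub continuous_const).pow 2)).continuousOn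
  rcases le_total Q P with hQP | hPQ
  · -- ψ antitone on [Q, P]
    have hA : AntitoneOn ψ (Icc Q P) := by
      apply antitoneOn_of_deriv_nonpos (convex_Icc Q P)
        (hcont _ (fun x hx => le_trans hQ hx.1))
      · intro x hx
        rw [interior_Icc] at hx
        exact ((hder x (by linarith [hx.1])).differentiableAt).differentiableWithinAt
      · intro x hx
        rw [interior_Icc] at hx
        have hax : a ≤ x := le_trans hQ hx.1.le
        rw [(hder x (by linarith)).deriv]
        have h := hlip x hax
        rw [abs_of_nonneg (by linarith [hx.1] : (0:ℝ) ≤ x - Q)] at h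
        have h2 := (le_abs_self (Q ^ (-α - 1) - x ^ (-α - 1)))
        nlinarith [abs_nonneg (Q ^ (-α - 1) - x ^ (-α - 1)), hα.le,
          mul_le_mul_of_nonneg_left h2 hα.le]
    have := hA (left_mem_Icc.mpr hQP) (right_mem_Icc.mpr hQP) hQP
    simp only [hψ] at this
    nlinarith [this]
  · -- ψ monotone on [P, Q]
    have hA : MonotoneOn ψ (Icc P Q) := by
      apply monotoneOn_of_deriv_nonneg (convex_Icc P Q)
        (hcont _ (fun x hx => le_trans hP hx.1))
      · intro x hx
        rw [interior_Icc] at hx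
        exact ((hder x (by linarith [hx.1])).differentiableAt).differentiableWithinAt
      · intro x hx
        rw [interior_Icc] at hx
        have hax : a ≤ x := le_trans hP hx.1.le
        rw [(hder x (by linarith)).deriv]
        have h := hlip x hax
        rw [abs_of_nonpos (by linarith [hx.2] : x - Q ≤ 0)] at h
        have h2 := neg_abs_le (Q ^ (-α - 1) - x ^ (-α - 1))
        nlinarith [mul_le_mul_of_nonneg_left (neg_le_of_neg_le h2) hα.le]
    have := hA (left_mem_Icc.mpr hPQ) (right_mem_Icc.mpr hPQ) hPQ
    simp only [hψ] at this
    nlinarith [this]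

/-- For γ > 1, p(v) = v^(-γ), vminus > 0, there exist c, δ* > 0 such that for all
0 < δ < δ*, and all v, w > 0 with |p(v)-p(w)| < δ and |p(w)-p(vminus)| < δ,
p(v|w) ≤ ((γ+1)/(2γ) · 1/p(w) + cδ) |p(v)-p(w)|². -/
theorem stmt_3 (γ : ℝ) (hγ : 1 < γ) (vminus : ℝ) (hvminus : 0 < vminus) :
    ∃ c : ℝ, 0 < c ∧ ∃ δs : ℝ, 0 < δs ∧ ∀ δ : ℝ, 0 < δ → δ < δs →
      ∀ v w : ℝ, 0 < v → 0 < w →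
        |v ^ (-γ) - w ^ (-γ)| < δ → |w ^ (-γ) - vminus ^ (-γ)| < δ →
        v ^ (-γ) - w ^ (-γ) - (-γ * w ^ (-γ - 1)) * (v - w) ≤
          ((γ + 1) / (2 * γ) * (1 / w ^ (-γ)) + c * δ) * |v ^ (-γ) - w ^ (-γ)| ^ 2 := by
  have hγ0 : γ ≠ 0 := by positivity
  have hγpos : (0:ℝ) < γ := by linarith
  set pm : ℝ := vminus ^ (-γ) with hpm
  have hpm0 : 0 < pm := Real.rpow_pos_of_pos hvminus _
  refine ⟨(γ + 1) / (2 * γ) * (2 * pm) ^ (1 + γ⁻¹) * ((γ⁻¹ + 2) * (pm / 2) ^ (-γ⁻¹ - 3)),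
    by positivity, pm / 4, by positivity, ?_⟩
  intro δ hδ hδs v w hv hw h1 h2
  set c : ℝ := (γ + 1) / (2 * γ) * (2 * pm) ^ (1 + γ⁻¹) * ((γ⁻¹ + 2) * (pm / 2) ^ (-γ⁻¹ - 3))
    with hc
  set P : ℝ := v ^ (-γ) with hPdef
  set Q : ℝ := w ^ (-γ) with hQdef
  have hPp : 0 < P := Real.rpow_pos_of_pos hv _
  have hQp : 0 < Q := Real.rpow_pos_of_pos hw _
  obtain ⟨h1a, h1b⟩ := abs_lt.mp h1
  obtain ⟨h2a, h2b⟩ := abs_lt.mp h2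
  have hm : pm / 2 ≤ Q - δ := by linarith
  have haP : Q - δ ≤ P := by linarith
  have haQ : Q - δ ≤ Q := by linarith
  have ha0 : 0 < Q - δ := by linarith
  have hQub : Q ≤ 2 * pm := by linarith
  -- identities
  have hvP : P ^ (-γ⁻¹) = v := by
    rw [hPdef, ← Real.rpow_mul hv.le, show -γ * -γ⁻¹ = 1 by field_simp, Real.rpow_one]
  have hwQ : Q ^ (-γ⁻¹) = w := by
    rw [hQdef, ← Real.rpow_mul hw.le, show -γ * -γ⁻¹ = 1 by field_simp, Real.rpow_one]
  have hw1 : w ^ (-γ - 1) = Q ^ (1 + γ⁻¹) := by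
    rw [hQdef, ← Real.rpow_mul hw.le, show -γ * (1 + γ⁻¹) = -γ - 1 by field_simp; ring]
  have hQinv : Q ^ (1 + γ⁻¹) * Q ^ (-γ⁻¹ - 1) = 1 := by
    rw [← Real.rpow_add hQp, show 1 + γ⁻¹ + (-γ⁻¹ - 1) = 0 by ring, Real.rpow_zero]
  have h1Q : Q ^ (1 + γ⁻¹) * Q ^ (-γ⁻¹ - 2) = 1 / Q := by
    rw [← Real.rpow_add hQp, show 1 + γ⁻¹ + (-γ⁻¹ - 2) = -1 by ring]
    rw [Real.rpow_neg_one, one_div]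
  have hA : 0 < Q ^ (1 + γ⁻¹) := Real.rpow_pos_of_pos hQp _
  clear_value P Q pm c
  -- Taylor bound
  have key := taylorB γ⁻¹ (Q - δ) P Q (by positivity) ha0 haP haQ
  -- coefficient bound
  have hAub : Q ^ (1 + γ⁻¹) ≤ (2 * pm) ^ (1 + γ⁻¹) :=
    Real.rpow_le_rpow hQp.le hQub (by positivity)
  have hDG : (Q - δ) ^ (-γ⁻¹ - 2) - Q ^ (-γ⁻¹ - 2) ≤ (γ⁻¹ + 2) * (pm / 2) ^ (-γ⁻¹ - 3) * δ := by
    have h := lipA (γ⁻¹ + 2) (pm / 2) (by positivity) (by positivity) hm (le_trans hm haQ)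
    rw [show -(γ⁻¹ + 2) = -γ⁻¹ - 2 by ring, show -γ⁻¹ - 2 - 1 = -γ⁻¹ - 3 by ring] at h
    have := (le_abs_self ((Q - δ) ^ (-γ⁻¹ - 2) - Q ^ (-γ⁻¹ - 2))).trans h
    rw [show Q - δ - Q = -δ by ring, abs_neg, abs_of_pos hδ] at this
    exact this
  have hAD : Q ^ (1 + γ⁻¹) * ((Q - δ) ^ (-γ⁻¹ - 2) - Q ^ (-γ⁻¹ - 2)) ≤
      (2 * pm) ^ (1 + γ⁻¹) * ((γ⁻¹ + 2) * (pm / 2) ^ (-γ⁻¹ - 3) * δ) :=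
    le_trans (mul_le_mul_of_nonneg_left hDG hA.le)
      (mul_le_mul_of_nonneg_right hAub (by positivity))
  have hcoef : (γ + 1) / (2 * γ) * Q ^ (1 + γ⁻¹) * (Q - δ) ^ (-γ⁻¹ - 2) ≤
      (γ + 1) / (2 * γ) * (1 / Q) + c * δ := by
    have h := mul_le_mul_of_nonneg_left hAD (by positivity : (0:ℝ) ≤ (γ + 1) / (2 * γ))
    rw [hc, ← h1Q]
    linarith [h]
  -- multiply key by γ * Q^(1+γ⁻¹)
  have hfac : (0:ℝ) ≤ γ * Q ^ (1 + γ⁻¹) := by positivity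
  have h := mul_le_mul_of_nonneg_left key hfac
  have hgg : γ * γ⁻¹ = 1 := mul_inv_cancel₀ hγ0
  have hLHS : γ * Q ^ (1 + γ⁻¹) * (P ^ (-γ⁻¹) - Q ^ (-γ⁻¹) + γ⁻¹ * Q ^ (-γ⁻¹ - 1) * (P - Q))
      = γ * Q ^ (1 + γ⁻¹) * (P ^ (-γ⁻¹) - Q ^ (-γ⁻¹)) + (P - Q) := by
    linear_combination (P - Q) * (γ * γ⁻¹) * hQinv + (P - Q) * hgg
  have hRHS : γ * Q ^ (1 + γ⁻¹) * (γ⁻¹ * (γ⁻¹ + 1) * (Q - δ) ^ (-γ⁻¹ - 2) / 2 * (P - Q) ^ 2)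
      = (γ + 1) / (2 * γ) * Q ^ (1 + γ⁻¹) * (Q - δ) ^ (-γ⁻¹ - 2) * (P - Q) ^ 2 := by
    field_simp
    ring
  have step1 : P - Q + γ * Q ^ (1 + γ⁻¹) * (P ^ (-γ⁻¹) - Q ^ (-γ⁻¹)) ≤
      (γ + 1) / (2 * γ) * Q ^ (1 + γ⁻¹) * (Q - δ) ^ (-γ⁻¹ - 2) * (P - Q) ^ 2 := by
    rw [← hRHS]; rw [hLHS] at h; linarith
  have step2 := mul_le_mul_of_nonneg_right hcoef (sq_nonneg (P - Q))
  rw [hw1, ← hvP, ← hwQ, sq_abs]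
  linarith [step1, step2]
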